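/- The sesquilinear form 𝔅((φ,ψ,y,z),(φ*,ψ*,y*,z*)) = κ₁⟨φₓ−ψ, φₓ*−ψ*⟩ + κ₂⟨yₓ−z, yₓ*−z*⟩ + b₁⟨ψₓ, ψₓ*⟩ + b₂⟨zₓ, zₓ*⟩ + ȷ⟨y−φ, y*−φ*⟩ is bounded and strongly coercive on [H₀¹(0,l)]⁴, i.e., there exists c > 0 such that 𝔅(V,V) ≥ c(‖φₓ‖² + ‖ψₓ‖² + ‖yₓ‖² + ‖zₓ‖²) for all V = (φ,ψ,y,z) ∈ [H₀¹(0,l)]⁴. -/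

import Mathlib

noncomputable section

/-- The sesquilinear form `𝔅` of the stationary DWCNT problem, on (representatives of)
`H₀¹(0,l)` functions: `𝔅(V,W) = κ₁⟨φₓ-ψ, φₓ*-ψ*⟩ + κ₂⟨yₓ-z, yₓ*-z*⟩ + b₁⟨ψₓ, ψₓ*⟩
+ b₂⟨zₓ, zₓ*⟩ + ȷ⟨y-φ, y*-φ*⟩`, with the `L²(0,l)` inner product. -/
def Bform (l κ₁ κ₂ b₁ b₂ j : ℝ) (φ ψ y z φ₂ ψ₂ y₂ z₂ : ℝ → ℂ) : ℂ :=
  (κ₁ : ℂ) * (∫ x in (0:ℝ)..l, (starRingEnd ℂ) (deriv φ x - ψ x) * (deriv φ₂ x - ψ₂ x))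
    + (κ₂ : ℂ) * (∫ x in (0:ℝ)..l, (starRingEnd ℂ) (deriv y x - z x) * (deriv y₂ x - z₂ x))
    + (b₁ : ℂ) * (∫ x in (0:ℝ)..l, (starRingEnd ℂ) (deriv ψ x) * (deriv ψ₂ x))
    + (b₂ : ℂ) * (∫ x in (0:ℝ)..l, (starRingEnd ℂ) (deriv z x) * (deriv z₂ x))
    + (j : ℂ) * (∫ x in (0:ℝ)..l, (starRingEnd ℂ) (y x - φ x) * (y₂ x - φ₂ x))

/-- The squared `[H₀¹(0,l)]⁴` (semi-)norm `‖φₓ‖² + ‖ψₓ‖² + ‖yₓ‖² + ‖zₓ‖²`. -/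
def H01normSq (l : ℝ) (φ ψ y z : ℝ → ℂ) : ℝ :=
  (∫ x in (0:ℝ)..l, ‖deriv φ x‖ ^ 2) + (∫ x in (0:ℝ)..l, ‖deriv ψ x‖ ^ 2)
    + (∫ x in (0:ℝ)..l, ‖deriv y x‖ ^ 2) + (∫ x in (0:ℝ)..l, ‖deriv z x‖ ^ 2)

/-- A representative of `H₀¹(0,l)`: a continuously differentiable function vanishing at the
endpoints. -/
def InH01 (l : ℝ) (φ : ℝ → ℂ) : Prop :=
  ContDiff ℝ 1 φ ∧ φ 0 = 0 ∧ φ l = 0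

open intervalIntegral

/-- L² norm on (0,l). -/
def Nrm (l : ℝ) (f : ℝ → ℂ) : ℝ := Real.sqrt (∫ x in (0:ℝ)..l, ‖f x‖ ^ 2)

lemma int_sq_nonneg {l : ℝ} (hl : 0 ≤ l) (f : ℝ → ℂ) :
    0 ≤ ∫ x in (0:ℝ)..l, ‖f x‖ ^ 2 :=
  intervalIntegral.integral_nonneg hl (fun x _ => by positivity)

lemma Nrm_nonneg (l : ℝ) (f : ℝ → ℂ) : 0 ≤ Nrm l f := Real.sqrt_nonneg _

lemma Nrm_sq {l : ℝ} (hl : 0 ≤ l) (f : ℝ → ℂ) :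
    Nrm l f ^ 2 = ∫ x in (0:ℝ)..l, ‖f x‖ ^ 2 :=
  Real.sq_sqrt (int_sq_nonneg hl f)

/-- Real Cauchy–Schwarz for interval integrals of continuous functions. -/
lemma real_CS {l : ℝ} (hl : 0 ≤ l) {u v : ℝ → ℝ} (hu : Continuous u) (hv : Continuous v) :
    (∫ x in (0:ℝ)..l, u x * v x) ≤
      Real.sqrt (∫ x in (0:ℝ)..l, u x ^ 2) * Real.sqrt (∫ x in (0:ℝ)..l, v x ^ 2) := by
  set A := ∫ x in (0:ℝ)..l, u x ^ 2 with hAdef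
  set B := ∫ x in (0:ℝ)..l, v x ^ 2 with hBdef
  set X := ∫ x in (0:ℝ)..l, u x * v x with hXdef
  have hA : 0 ≤ A := intervalIntegral.integral_nonneg hl (fun x _ => by positivity)
  have hB : 0 ≤ B := intervalIntegral.integral_nonneg hl (fun x _ => by positivity)
  have key : ∀ s : ℝ, 0 ≤ A * (s * s) + (-2 * X) * s + B := by
    intro s
    have h0 : 0 ≤ ∫ x in (0:ℝ)..l, (s * u x - v x) ^ 2 :=
      intervalIntegral.integral_nonneg hl (fun x _ => by positivity)
    have hexp : (∫ x in (0:ℝ)..l, (s * u x - v x) ^ 2)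
        = s ^ 2 * A - 2 * s * X + B := by
      have h1 : (fun x => (s * u x - v x) ^ 2)
          = fun x => (s ^ 2 * u x ^ 2 - 2 * s * (u x * v x)) + v x ^ 2 := by
        funext x; ring
      rw [h1, intervalIntegral.integral_add, intervalIntegral.integral_sub,
        intervalIntegral.integral_const_mul, intervalIntegral.integral_const_mul]
      · exact (continuous_const.mul (hu.pow 2)).intervalIntegrable _ _
      · exact (continuous_const.mul (hu.mul hv)).intervalIntegrable _ _
      · exact ((continuous_const.mul (hu.pow 2)).sub (continuous_const.mul (hu.mul hv))).intervalIntegrable _ _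
      · exact (hv.pow 2).intervalIntegrable _ _
    nlinarith [h0, hexp]
  have disc := discrim_le_zero key
  rw [discrim] at disc
  have hX2 : X ^ 2 ≤ A * B := by nlinarith
  calc X ≤ |X| := le_abs_self X
    _ = Real.sqrt (X ^ 2) := (Real.sqrt_sq_eq_abs X).symm
    _ ≤ Real.sqrt (A * B) := Real.sqrt_le_sqrt hX2
    _ = Real.sqrt A * Real.sqrt B := Real.sqrt_mul hA B

/-- Complex Cauchy–Schwarz. -/
lemma complex_CS {l : ℝ} (hl : 0 ≤ l) {f g : ℝ → ℂ} (hf : Continuous f) (hg : Continuous g) :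
    ‖∫ x in (0:ℝ)..l, (starRingEnd ℂ) (f x) * g x‖ ≤ Nrm l f * Nrm l g := by
  calc ‖∫ x in (0:ℝ)..l, (starRingEnd ℂ) (f x) * g x‖
      ≤ ∫ x in (0:ℝ)..l, ‖(starRingEnd ℂ) (f x) * g x‖ :=
        intervalIntegral.norm_integral_le_integral_norm hl
    _ = ∫ x in (0:ℝ)..l, ‖f x‖ * ‖g x‖ := by
        congr 1; funext x; rw [norm_mul, RCLike.norm_conj]
    _ ≤ Nrm l f * Nrm l g := real_CS hl hf.norm hg.norm

lemma Nrm_add_le {l : ℝ} (hl : 0 ≤ l) {f g : ℝ → ℂ} (hf : Continuous f) (hg : Continuous g) :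
    Nrm l (fun x => f x + g x) ≤ Nrm l f + Nrm l g := by
  have h1 : (∫ x in (0:ℝ)..l, ‖f x + g x‖ ^ 2) ≤ (Nrm l f + Nrm l g) ^ 2 := by
    have hmono : (∫ x in (0:ℝ)..l, ‖f x + g x‖ ^ 2)
        ≤ ∫ x in (0:ℝ)..l, (‖f x‖ ^ 2 + 2 * (‖f x‖ * ‖g x‖) + ‖g x‖ ^ 2) := by
      apply intervalIntegral.integral_mono_on hl
      · exact ((hf.add hg).norm.pow 2).intervalIntegrable _ _
      · exact (((hf.norm.pow 2).add (continuous_const.mul (hf.norm.mul hg.norm))).add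
          (hg.norm.pow 2)).intervalIntegrable _ _
      · intro x _
        have := norm_add_le (f x) (g x)
        nlinarith [norm_nonneg (f x), norm_nonneg (g x), norm_nonneg (f x + g x)]
    have hsplit : (∫ x in (0:ℝ)..l, (‖f x‖ ^ 2 + 2 * (‖f x‖ * ‖g x‖) + ‖g x‖ ^ 2))
        = (∫ x in (0:ℝ)..l, ‖f x‖ ^ 2) + 2 * (∫ x in (0:ℝ)..l, ‖f x‖ * ‖g x‖)
          + (∫ x in (0:ℝ)..l, ‖g x‖ ^ 2) := by
      rw [intervalIntegral.integral_add, intervalIntegral.integral_add,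
        intervalIntegral.integral_const_mul]
      · exact (hf.norm.pow 2).intervalIntegrable _ _
      · exact (continuous_const.mul (hf.norm.mul hg.norm)).intervalIntegrable _ _
      · exact ((hf.norm.pow 2).add (continuous_const.mul (hf.norm.mul hg.norm))).intervalIntegrable _ _
      · exact (hg.norm.pow 2).intervalIntegrable _ _
    have hcs := real_CS hl hf.norm hg.norm
    have hNf := Nrm_sq hl f
    have hNg := Nrm_sq hl g
    unfold Nrm at *
    nlinarith
  have := Real.sqrt_le_sqrt h1
  rwa [Real.sqrt_sq (add_nonneg (Nrm_nonneg _ _) (Nrm_nonneg _ _))] at this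

lemma Nrm_sub_le {l : ℝ} (hl : 0 ≤ l) {f g : ℝ → ℂ} (hf : Continuous f) (hg : Continuous g) :
    Nrm l (fun x => f x - g x) ≤ Nrm l f + Nrm l g := by
  have h1 : (fun x => f x - g x) = fun x => f x + (-g x) := by funext x; ring
  have h2 : Nrm l (fun x => -g x) = Nrm l g := by unfold Nrm; simp
  rw [h1]
  calc Nrm l (fun x => f x + (-g x)) ≤ Nrm l f + Nrm l (fun x => -g x) :=
        Nrm_add_le hl hf hg.neg
    _ = Nrm l f + Nrm l g := by rw [h2]

/-- Poincaré inequality. -/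
lemma poincare {l : ℝ} (hl : 0 ≤ l) {f : ℝ → ℂ} (hf : ContDiff ℝ 1 f) (h0 : f 0 = 0) :
    Nrm l f ≤ l * Nrm l (deriv f) := by
  have hdc : Continuous (deriv f) := hf.continuous_deriv le_rfl
  set M := Nrm l (deriv f) with hM
  have hMnn : 0 ≤ M := Nrm_nonneg _ _
  have hbound : ∀ x ∈ Set.Icc (0:ℝ) l, ‖f x‖ ^ 2 ≤ l * M ^ 2 := by
    rintro x ⟨hx0, hxl⟩
    have hftc : (∫ t in (0:ℝ)..x, deriv f t) = f x := by
      rw [intervalIntegral.integral_deriv_eq_sub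
        (fun t _ => hf.differentiable one_ne_zero t) (hdc.intervalIntegrable _ _), h0, sub_zero]
    have h1 : ‖f x‖ ≤ ∫ t in (0:ℝ)..x, ‖deriv f t‖ := by
      rw [← hftc]
      exact intervalIntegral.norm_integral_le_integral_norm hx0
    have h2 : (∫ t in (0:ℝ)..x, ‖deriv f t‖) ≤ ∫ t in (0:ℝ)..l, ‖deriv f t‖ := by
      have hsplit : (∫ t in (0:ℝ)..x, ‖deriv f t‖) + (∫ t in x..l, ‖deriv f t‖)
          = ∫ t in (0:ℝ)..l, ‖deriv f t‖ :=
        intervalIntegral.integral_add_adjacent_intervals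
          (hdc.norm.intervalIntegrable _ _) (hdc.norm.intervalIntegrable _ _)
      have hpos : 0 ≤ ∫ t in x..l, ‖deriv f t‖ :=
        intervalIntegral.integral_nonneg hxl (fun t _ => norm_nonneg _)
      linarith
    have h3 : (∫ t in (0:ℝ)..l, ‖deriv f t‖) ≤ M * Real.sqrt l := by
      have hone : (∫ t in (0:ℝ)..l, (1:ℝ) ^ 2) = l := by simp
      have := real_CS hl hdc.norm (continuous_const : Continuous fun _ : ℝ => (1:ℝ))
      simpa [hone, Nrm, hM] using this
    have h4 : ‖f x‖ ≤ M * Real.sqrt l := le_trans h1 (le_trans h2 h3)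
    have h5 : 0 ≤ ‖f x‖ := norm_nonneg _
    nlinarith [Real.sq_sqrt hl, Real.sqrt_nonneg l]
  have hint : (∫ x in (0:ℝ)..l, ‖f x‖ ^ 2) ≤ l * (l * M ^ 2) := by
    calc (∫ x in (0:ℝ)..l, ‖f x‖ ^ 2) ≤ ∫ _x in (0:ℝ)..l, l * M ^ 2 := by
          apply intervalIntegral.integral_mono_on hl
          · exact (hf.continuous.norm.pow 2).intervalIntegrable _ _
          · exact intervalIntegrable_const
          · exact hbound
      _ = l * (l * M ^ 2) := by simp [mul_comm]
  have : Nrm l f ≤ Real.sqrt (l * (l * M ^ 2)) := Real.sqrt_le_sqrt hint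
  calc Nrm l f ≤ Real.sqrt (l * (l * M ^ 2)) := this
    _ = l * M := by
        rw [show l * (l * M ^ 2) = (l * M) ^ 2 by ring, Real.sqrt_sq (by positivity)]

lemma self_int {l : ℝ} (u : ℝ → ℂ) :
    (∫ x in (0:ℝ)..l, (starRingEnd ℂ) (u x) * u x)
      = (((∫ x in (0:ℝ)..l, ‖u x‖ ^ 2) : ℝ) : ℂ) := by
  have h := RCLike.intervalIntegral_ofReal (𝕜 := ℂ) (a := (0:ℝ)) (b := l)
    (μ := MeasureTheory.volume) (f := fun x => ‖u x‖ ^ 2)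
  calc (∫ x in (0:ℝ)..l, (starRingEnd ℂ) (u x) * u x)
      = ∫ x in (0:ℝ)..l, ((‖u x‖ ^ 2 : ℝ) : ℂ) := by
        congr 1; funext x
        rw [mul_comm, Complex.mul_conj, Complex.normSq_eq_norm_sq]
    _ = _ := by exact_mod_cast h


set_option maxHeartbeats 1600000
/-- For positive constants `κ₁, κ₂, b₁, b₂, ȷ`, the sesquilinear form `𝔅`
is bounded and strongly coercive on `[H₀¹(0,l)]⁴`: there are `Cb > 0` and `c > 0` with
`‖𝔅(V,W)‖ ≤ Cb ‖V‖_{[H₀¹]⁴} ‖W‖_{[H₀¹]⁴}` and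
`Re 𝔅(V,V) ≥ c (‖φₓ‖² + ‖ψₓ‖² + ‖yₓ‖² + ‖zₓ‖²)` for all `V = (φ,ψ,y,z)`,
`W = (φ*,ψ*,y*,z*)` in `[H₀¹(0,l)]⁴`. -/
theorem statement11 (l κ₁ κ₂ b₁ b₂ j : ℝ) (hl : 0 < l)
    (hκ₁ : 0 < κ₁) (hκ₂ : 0 < κ₂) (hb₁ : 0 < b₁) (hb₂ : 0 < b₂) (hj : 0 < j) :
    ∃ Cb > 0, ∃ c > 0,
      (∀ φ ψ y z φ₂ ψ₂ y₂ z₂ : ℝ → ℂ,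
        InH01 l φ → InH01 l ψ → InH01 l y → InH01 l z →
        InH01 l φ₂ → InH01 l ψ₂ → InH01 l y₂ → InH01 l z₂ →
        ‖Bform l κ₁ κ₂ b₁ b₂ j φ ψ y z φ₂ ψ₂ y₂ z₂‖ ≤
          Cb * Real.sqrt (H01normSq l φ ψ y z) * Real.sqrt (H01normSq l φ₂ ψ₂ y₂ z₂)) ∧
      (∀ φ ψ y z : ℝ → ℂ,
        InH01 l φ → InH01 l ψ → InH01 l y → InH01 l z →
        c * H01normSq l φ ψ y z ≤ (Bform l κ₁ κ₂ b₁ b₂ j φ ψ y z φ ψ y z).re) := by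
  have hl0 : (0:ℝ) ≤ l := hl.le
  -- generic factor bounds
  have fb : ∀ φ ψ y z : ℝ → ℂ, InH01 l φ → InH01 l ψ → InH01 l y → InH01 l z →
      (Nrm l (fun x => deriv φ x - ψ x) ≤ (1 + 2*l) * Real.sqrt (H01normSq l φ ψ y z) ∧
       Nrm l (fun x => deriv y x - z x) ≤ (1 + 2*l) * Real.sqrt (H01normSq l φ ψ y z) ∧
       Nrm l (deriv ψ) ≤ (1 + 2*l) * Real.sqrt (H01normSq l φ ψ y z) ∧
       Nrm l (deriv z) ≤ (1 + 2*l) * Real.sqrt (H01normSq l φ ψ y z) ∧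
       Nrm l (fun x => y x - φ x) ≤ (1 + 2*l) * Real.sqrt (H01normSq l φ ψ y z)) := by
    intro φ ψ y z hφ hψ hy hz
    set D := H01normSq l φ ψ y z with hD
    set S := Real.sqrt D with hS
    have hSnn : 0 ≤ S := Real.sqrt_nonneg _
    have h1 : (∫ x in (0:ℝ)..l, ‖deriv φ x‖ ^ 2) ≤ D := by
      have := int_sq_nonneg hl0 (deriv ψ); have := int_sq_nonneg hl0 (deriv y)
      have := int_sq_nonneg hl0 (deriv z); rw [hD]; unfold H01normSq; linarith
    have h2 : (∫ x in (0:ℝ)..l, ‖deriv ψ x‖ ^ 2) ≤ D := by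
      have := int_sq_nonneg hl0 (deriv φ); have := int_sq_nonneg hl0 (deriv y)
      have := int_sq_nonneg hl0 (deriv z); rw [hD]; unfold H01normSq; linarith
    have h3 : (∫ x in (0:ℝ)..l, ‖deriv y x‖ ^ 2) ≤ D := by
      have := int_sq_nonneg hl0 (deriv ψ); have := int_sq_nonneg hl0 (deriv φ)
      have := int_sq_nonneg hl0 (deriv z); rw [hD]; unfold H01normSq; linarith
    have h4 : (∫ x in (0:ℝ)..l, ‖deriv z x‖ ^ 2) ≤ D := by
      have := int_sq_nonneg hl0 (deriv ψ); have := int_sq_nonneg hl0 (deriv y)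
      have := int_sq_nonneg hl0 (deriv φ); rw [hD]; unfold H01normSq; linarith
    have hNφ' : Nrm l (deriv φ) ≤ S := Real.sqrt_le_sqrt h1
    have hNψ' : Nrm l (deriv ψ) ≤ S := Real.sqrt_le_sqrt h2
    have hNy' : Nrm l (deriv y) ≤ S := Real.sqrt_le_sqrt h3
    have hNz' : Nrm l (deriv z) ≤ S := Real.sqrt_le_sqrt h4
    have hPφ : Nrm l φ ≤ l * Nrm l (deriv φ) := poincare hl0 hφ.1 hφ.2.1
    have hPψ : Nrm l ψ ≤ l * Nrm l (deriv ψ) := poincare hl0 hψ.1 hψ.2.1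
    have hPy : Nrm l y ≤ l * Nrm l (deriv y) := poincare hl0 hy.1 hy.2.1
    have t1 : Nrm l (fun x => deriv φ x - ψ x) ≤ Nrm l (deriv φ) + Nrm l ψ :=
      Nrm_sub_le hl0 (hφ.1.continuous_deriv le_rfl) hψ.1.continuous
    have t2 : Nrm l (fun x => deriv y x - z x) ≤ Nrm l (deriv y) + Nrm l z :=
      Nrm_sub_le hl0 (hy.1.continuous_deriv le_rfl) hz.1.continuous
    have t3 : Nrm l (fun x => y x - φ x) ≤ Nrm l y + Nrm l φ :=
      Nrm_sub_le hl0 hy.1.continuous hφ.1.continuous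
    have hPz : Nrm l z ≤ l * Nrm l (deriv z) := poincare hl0 hz.1 hz.2.1
    refine ⟨by nlinarith, by nlinarith, by nlinarith, by nlinarith, by nlinarith⟩
  refine ⟨(κ₁ + κ₂ + b₁ + b₂ + j) * (1 + 2*l)^2, by positivity,
    min κ₁ (min b₁ (min κ₂ b₂)) / (2*l^2 + 2), by positivity, ?_, ?_⟩
  · -- boundedness
    intro φ ψ y z φ₂ ψ₂ y₂ z₂ hφ hψ hy hz hφ₂ hψ₂ hy₂ hz₂
    obtain ⟨f1, f2, f3, f4, f5⟩ := fb φ ψ y z hφ hψ hy hz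
    obtain ⟨g1, g2, g3, g4, g5⟩ := fb φ₂ ψ₂ y₂ z₂ hφ₂ hψ₂ hy₂ hz₂
    set S := Real.sqrt (H01normSq l φ ψ y z)
    set S₂ := Real.sqrt (H01normSq l φ₂ ψ₂ y₂ z₂)
    have hSnn : 0 ≤ S := Real.sqrt_nonneg _
    have hS₂nn : 0 ≤ S₂ := Real.sqrt_nonneg _
    have cφ' := hφ.1.continuous_deriv le_rfl
    have cψ' := hψ.1.continuous_deriv le_rfl
    have cy' := hy.1.continuous_deriv le_rfl
    have cz' := hz.1.continuous_deriv le_rfl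
    have cφ₂' := hφ₂.1.continuous_deriv le_rfl
    have cψ₂' := hψ₂.1.continuous_deriv le_rfl
    have cy₂' := hy₂.1.continuous_deriv le_rfl
    have cz₂' := hz₂.1.continuous_deriv le_rfl
    have cs1 := complex_CS hl0 (cφ'.sub hψ.1.continuous) (cφ₂'.sub hψ₂.1.continuous)
    have cs2 := complex_CS hl0 (cy'.sub hz.1.continuous) (cy₂'.sub hz₂.1.continuous)
    have cs3 := complex_CS hl0 cψ' cψ₂'
    have cs4 := complex_CS hl0 cz' cz₂'
    have cs5 := complex_CS hl0 (hy.1.continuous.sub hφ.1.continuous)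
      (hy₂.1.continuous.sub hφ₂.1.continuous)
    have K := (1 + 2*l)
    have prod : ∀ a b c d : ℝ, 0 ≤ a → 0 ≤ b → a ≤ (1+2*l)*S → b ≤ (1+2*l)*S₂ →
        a * b ≤ (1+2*l)^2 * S * S₂ := by
      intro a b c d ha hb haS hbS
      calc a * b ≤ ((1+2*l)*S) * ((1+2*l)*S₂) :=
            mul_le_mul haS hbS hb (by positivity)
        _ = (1+2*l)^2 * S * S₂ := by ring
    have p1 := prod _ _ 0 0 (Nrm_nonneg _ _) (Nrm_nonneg _ _) f1 g1
    have p2 := prod _ _ 0 0 (Nrm_nonneg _ _) (Nrm_nonneg _ _) f2 g2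
    have p3 := prod _ _ 0 0 (Nrm_nonneg _ _) (Nrm_nonneg _ _) f3 g3
    have p4 := prod _ _ 0 0 (Nrm_nonneg _ _) (Nrm_nonneg _ _) f4 g4
    have p5 := prod _ _ 0 0 (Nrm_nonneg _ _) (Nrm_nonneg _ _) f5 g5
    unfold Bform
    have habs : ∀ r : ℝ, 0 < r → ‖(r:ℂ)‖ = r := fun r hr => by
      simp [Complex.norm_real, Real.norm_eq_abs, abs_of_pos hr]
    calc ‖(κ₁ : ℂ) * (∫ x in (0:ℝ)..l, (starRingEnd ℂ) (deriv φ x - ψ x) * (deriv φ₂ x - ψ₂ x))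
        + (κ₂ : ℂ) * (∫ x in (0:ℝ)..l, (starRingEnd ℂ) (deriv y x - z x) * (deriv y₂ x - z₂ x))
        + (b₁ : ℂ) * (∫ x in (0:ℝ)..l, (starRingEnd ℂ) (deriv ψ x) * (deriv ψ₂ x))
        + (b₂ : ℂ) * (∫ x in (0:ℝ)..l, (starRingEnd ℂ) (deriv z x) * (deriv z₂ x))
        + (j : ℂ) * (∫ x in (0:ℝ)..l, (starRingEnd ℂ) (y x - φ x) * (y₂ x - φ₂ x))‖
        ≤ κ₁ * ‖(∫ x in (0:ℝ)..l, (starRingEnd ℂ) (deriv φ x - ψ x) * (deriv φ₂ x - ψ₂ x))‖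
        + κ₂ * ‖(∫ x in (0:ℝ)..l, (starRingEnd ℂ) (deriv y x - z x) * (deriv y₂ x - z₂ x))‖
        + b₁ * ‖(∫ x in (0:ℝ)..l, (starRingEnd ℂ) (deriv ψ x) * (deriv ψ₂ x))‖
        + b₂ * ‖(∫ x in (0:ℝ)..l, (starRingEnd ℂ) (deriv z x) * (deriv z₂ x))‖
        + j * ‖(∫ x in (0:ℝ)..l, (starRingEnd ℂ) (y x - φ x) * (y₂ x - φ₂ x))‖ := by
          refine le_trans (norm_add_le _ _) ?_
          gcongr
          refine le_trans (norm_add_le _ _) ?_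
          gcongr
          refine le_trans (norm_add_le _ _) ?_
          gcongr
          · refine le_trans (norm_add_le _ _) ?_
            rw [norm_mul, norm_mul, habs _ hκ₁, habs _ hκ₂]
          · rw [norm_mul, habs _ hb₁]
          · rw [norm_mul, habs _ hb₂]
          · rw [norm_mul, habs _ hj]
      _ ≤ κ₁ * ((1+2*l)^2 * S * S₂) + κ₂ * ((1+2*l)^2 * S * S₂) + b₁ * ((1+2*l)^2 * S * S₂)
          + b₂ * ((1+2*l)^2 * S * S₂) + j * ((1+2*l)^2 * S * S₂) := by
          gcongr <;> [exact le_trans cs1 p1; exact le_trans cs2 p2; exact le_trans cs3 p3;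
            exact le_trans cs4 p4; exact le_trans cs5 p5]
      _ = (κ₁ + κ₂ + b₁ + b₂ + j) * (1 + 2*l)^2 * S * S₂ := by ring
  · -- coercivity
    intro φ ψ y z hφ hψ hy hz
    set c := min κ₁ (min b₁ (min κ₂ b₂)) / (2*l^2 + 2) with hc
    have hcκ₁ : c * (2*l^2 + 2) ≤ κ₁ := by
      rw [hc, div_mul_cancel₀ _ (by positivity)]
      exact le_trans (min_le_left _ _) le_rfl
    have hcb₁ : c * (2*l^2 + 2) ≤ b₁ := by
      rw [hc, div_mul_cancel₀ _ (by positivity)]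
      exact le_trans (min_le_right _ _) (min_le_left _ _)
    have hcκ₂ : c * (2*l^2 + 2) ≤ κ₂ := by
      rw [hc, div_mul_cancel₀ _ (by positivity)]
      exact le_trans (min_le_right _ _) (le_trans (min_le_right _ _) (min_le_left _ _))
    have hcb₂ : c * (2*l^2 + 2) ≤ b₂ := by
      rw [hc, div_mul_cancel₀ _ (by positivity)]
      exact le_trans (min_le_right _ _) (le_trans (min_le_right _ _) (min_le_right _ _))
    have hcpos : 0 < c := by positivity
    -- compute real part
    have hre : (Bform l κ₁ κ₂ b₁ b₂ j φ ψ y z φ ψ y z).re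
        = κ₁ * (∫ x in (0:ℝ)..l, ‖deriv φ x - ψ x‖ ^ 2)
        + κ₂ * (∫ x in (0:ℝ)..l, ‖deriv y x - z x‖ ^ 2)
        + b₁ * (∫ x in (0:ℝ)..l, ‖deriv ψ x‖ ^ 2)
        + b₂ * (∫ x in (0:ℝ)..l, ‖deriv z x‖ ^ 2)
        + j * (∫ x in (0:ℝ)..l, ‖y x - φ x‖ ^ 2) := by
      unfold Bform
      rw [self_int (fun x => deriv φ x - ψ x), self_int (fun x => deriv y x - z x),
        self_int (deriv ψ), self_int (deriv z), self_int (fun x => y x - φ x)]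
      simp
    rw [hre]
    -- notation
    set P := ∫ x in (0:ℝ)..l, ‖deriv φ x - ψ x‖ ^ 2 with hP
    set Q := ∫ x in (0:ℝ)..l, ‖deriv y x - z x‖ ^ 2 with hQ
    set Sψ := ∫ x in (0:ℝ)..l, ‖deriv ψ x‖ ^ 2 with hSψ
    set Tz := ∫ x in (0:ℝ)..l, ‖deriv z x‖ ^ 2 with hTz
    set R := ∫ x in (0:ℝ)..l, ‖y x - φ x‖ ^ 2 with hR
    have hPn : 0 ≤ P := int_sq_nonneg hl0 _
    have hQn : 0 ≤ Q := int_sq_nonneg hl0 _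
    have hSn : 0 ≤ Sψ := int_sq_nonneg hl0 _
    have hTn : 0 ≤ Tz := int_sq_nonneg hl0 _
    have hRn : 0 ≤ R := int_sq_nonneg hl0 _
    -- key: ∫‖φ'‖² ≤ 2P + 2l²Sψ
    have keyφ : (∫ x in (0:ℝ)..l, ‖deriv φ x‖ ^ 2) ≤ 2 * P + 2 * l^2 * Sψ := by
      have tri : Nrm l (deriv φ) ≤ Nrm l (fun x => deriv φ x - ψ x) + Nrm l ψ := by
        have heq : Nrm l (deriv φ)
            = Nrm l (fun x => (deriv φ x - ψ x) + ψ x) := by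
          unfold Nrm; congr 1; apply intervalIntegral.integral_congr; intro x _; simp
        rw [heq]
        exact Nrm_add_le hl0 ((hφ.1.continuous_deriv le_rfl).sub hψ.1.continuous)
          hψ.1.continuous
      have hPψ : Nrm l ψ ≤ l * Nrm l (deriv ψ) := poincare hl0 hψ.1 hψ.2.1
      have e1 := Nrm_sq hl0 (deriv φ)
      have e2 := Nrm_sq hl0 (fun x => deriv φ x - ψ x)
      have e3 := Nrm_sq hl0 (deriv ψ)
      have n1 := Nrm_nonneg l (deriv φ)
      have n2 := Nrm_nonneg l (fun x => deriv φ x - ψ x)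
      have n3 := Nrm_nonneg l (deriv ψ)
      have n4 := Nrm_nonneg l ψ
      have tri2 : Nrm l (deriv φ) ≤ Nrm l (fun x => deriv φ x - ψ x) + l * Nrm l (deriv ψ) := by
        linarith
      have sq2 := pow_le_pow_left₀ n1 tri2 2
      nlinarith [sq_nonneg (Nrm l (fun x => deriv φ x - ψ x) - l * Nrm l (deriv ψ)), hP, hSψ,
        sq2, e1, e2, e3]
    have keyy : (∫ x in (0:ℝ)..l, ‖deriv y x‖ ^ 2) ≤ 2 * Q + 2 * l^2 * Tz := by
      have tri : Nrm l (deriv y) ≤ Nrm l (fun x => deriv y x - z x) + Nrm l z := by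
        have heq : Nrm l (deriv y)
            = Nrm l (fun x => (deriv y x - z x) + z x) := by
          unfold Nrm; congr 1; apply intervalIntegral.integral_congr; intro x _; simp
        rw [heq]
        exact Nrm_add_le hl0 ((hy.1.continuous_deriv le_rfl).sub hz.1.continuous)
          hz.1.continuous
      have hPz : Nrm l z ≤ l * Nrm l (deriv z) := poincare hl0 hz.1 hz.2.1
      have e1 := Nrm_sq hl0 (deriv y)
      have e2 := Nrm_sq hl0 (fun x => deriv y x - z x)
      have e3 := Nrm_sq hl0 (deriv z)
      have n1 := Nrm_nonneg l (deriv y)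
      have n2 := Nrm_nonneg l (fun x => deriv y x - z x)
      have n3 := Nrm_nonneg l (deriv z)
      have n4 := Nrm_nonneg l z
      have tri2 : Nrm l (deriv y) ≤ Nrm l (fun x => deriv y x - z x) + l * Nrm l (deriv z) := by
        linarith
      have sq2 := pow_le_pow_left₀ n1 tri2 2
      nlinarith [sq_nonneg (Nrm l (fun x => deriv y x - z x) - l * Nrm l (deriv z)), hQ, hTz,
        sq2, e1, e2, e3]
    unfold H01normSq
    rw [← hSψ, ← hTz]
    nlinarith [mul_nonneg hcpos.le hPn, mul_nonneg hcpos.le hQn, mul_nonneg hcpos.le hSn,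
      mul_nonneg hcpos.le hTn,
      mul_le_mul_of_nonneg_left keyφ hcpos.le, mul_le_mul_of_nonneg_left keyy hcpos.le,
      mul_le_mul_of_nonneg_right hcκ₁ hPn, mul_le_mul_of_nonneg_right hcb₁ hSn,
      mul_le_mul_of_nonneg_right hcκ₂ hQn, mul_le_mul_of_nonneg_right hcb₂ hTn,
      mul_nonneg hj.le hRn, mul_nonneg (mul_nonneg hcpos.le hPn) (sq_nonneg l),
      mul_nonneg (mul_nonneg hcpos.le hQn) (sq_nonneg l),
      mul_nonneg (mul_nonneg hcpos.le hSn) (sq_nonneg l),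
      mul_nonneg (mul_nonneg hcpos.le hTn) (sq_nonneg l)]
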